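/- Let n ≥ 1, let A be a finite-dimensional complex inner product space, let a₀ ∈ A be a unit vector, let (φ_i)_{i∈[n]} be an orthonormal family in A, and let p be a probability distribution on [n]. Suppose U_p is a unitary on A ⊗ ℂⁿ with U_p(a₀ ⊗ e₁) = Σ_i √(p_i) (φ_i ⊗ e_i), and U_copy is a unitary on ℂⁿ ⊗ ℂⁿ with U_copy(e_i ⊗ e₁) = e_i ⊗ e_i for all i. Let Ũ_p := (U_p† ⊗ I)(I ⊗ U_copy)(U_p ⊗ I), and let Π be the orthogonal projection of A ⊗ ℂⁿ ⊗ ℂⁿ onto the subspace (ℂ·a₀) ⊗ (ℂ·e₁) ⊗ ℂⁿ. Then Π(Ũ_p(a₀ ⊗ e₁ ⊗ e₁)) = Σ_{i∈[n]} p_i · (a₀ ⊗ e₁ ⊗ e_i); equivalently, Ũ_p(a₀ ⊗ e₁ ⊗ e₁) = Σ_i p_i (a₀ ⊗ e₁ ⊗ e_i) + w for some vector w with Π w = 0. -/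

import Mathlib

open scoped ComplexInnerProductSpace

/-- The tensor product of two vectors of Euclidean spaces, realized concretely:
`(tp f g) (a, b) = f a * g b`.  This realizes `EuclideanSpace ℂ (α × β)` as the
tensor product `EuclideanSpace ℂ α ⊗ EuclideanSpace ℂ β` with the induced inner
product `⟪u₁ ⊗ v₁, u₂ ⊗ v₂⟫ = ⟪u₁, u₂⟫ ⟪v₁, v₂⟫`. -/
noncomputable def tp {α β : Type*} (f : EuclideanSpace ℂ α) (g : EuclideanSpace ℂ β) :
    EuclideanSpace ℂ (α × β) := WithLp.toLp 2 (fun x => f x.1 * g x.2)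

/-- Tensor of a vector of `EuclideanSpace ℂ α` with a vector of
`EuclideanSpace ℂ (β × γ)`, placed in `EuclideanSpace ℂ ((α × β) × γ)`. -/
noncomputable def tpL {α β γ : Type*} (a : EuclideanSpace ℂ α) (z : EuclideanSpace ℂ (β × γ)) :
    EuclideanSpace ℂ ((α × β) × γ) := WithLp.toLp 2 (fun x => a x.1.1 * z (x.1.2, x.2))

/-- The standard orthonormal basis vector `e_i` of `ℂⁿ`. -/
noncomputable def eb {n : ℕ} (i : Fin n) : EuclideanSpace ℂ (Fin n) :=
  EuclideanSpace.single i 1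

lemma euclid_sum_apply {α κ : Type*} (s : Finset κ) (f : κ → EuclideanSpace ℂ α) (x : α) :
    (∑ i ∈ s, f i) x = ∑ i ∈ s, f i x := by
  induction s using Finset.cons_induction with
  | empty => simp [PiLp.zero_apply]
  | cons a s ha ih => simp [Finset.sum_cons, PiLp.add_apply, ih]

lemma tp_inner {α β : Type*} [Fintype α] [Fintype β] (f f' : EuclideanSpace ℂ α)
    (g g' : EuclideanSpace ℂ β) : ⟪tp f g, tp f' g'⟫ = ⟪f, f'⟫ * ⟪g, g'⟫ := by
  simp only [tp, PiLp.toLp_apply, PiLp.inner_apply, RCLike.inner_apply, Fintype.sum_prod_type, map_mul]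
  rw [Finset.sum_mul_sum]
  congr 1; ext a; congr 1; ext b; ring

lemma tp_sum_left {α β κ : Type*} (s : Finset κ) (f : κ → EuclideanSpace ℂ α)
    (g : EuclideanSpace ℂ β) : tp (∑ i ∈ s, f i) g = ∑ i ∈ s, tp (f i) g := by
  ext x
  rw [show (∑ i ∈ s, tp (f i) g) x = ∑ i ∈ s, tp (f i) g x from euclid_sum_apply ..]
  simp [tp, euclid_sum_apply, Finset.sum_mul]

lemma tp_smul_left {α β : Type*} (c : ℂ) (f : EuclideanSpace ℂ α)
    (g : EuclideanSpace ℂ β) : tp (c • f) g = c • tp f g := by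
  ext x
  rw [show (c • tp f g) x = c • tp f g x from PiLp.smul_apply ..]
  simp [tp, PiLp.smul_apply, mul_assoc]

lemma tp_tp_eq_tpL {α β γ : Type*} (a : EuclideanSpace ℂ α) (b : EuclideanSpace ℂ β)
    (c : EuclideanSpace ℂ γ) : tp (tp a b) c = tpL a (tp b c) := by
  ext x; simp [tp, tpL, mul_assoc]

lemma eb_inner {n : ℕ} (i j : Fin n) : ⟪eb i, eb j⟫ = if i = j then 1 else 0 := by
  simp [eb, EuclideanSpace.inner_single_left, EuclideanSpace.single_apply, eq_comm]

/-- Let `n ≥ 1`, let `A` be a finite-dimensional complex inner product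
space (realized as `EuclideanSpace ℂ ι`), `a₀ ∈ A` a unit vector, `(φ i)` an orthonormal
family in `A`, and `p` a probability distribution on `[n]`.  Let `U_p` be a unitary on
`A ⊗ ℂⁿ` with `U_p (a₀ ⊗ e₁) = ∑ i, √(p i) • (φ i ⊗ e i)`, and `U_copy` a unitary on
`ℂⁿ ⊗ ℂⁿ` with `U_copy (e i ⊗ e₁) = e i ⊗ e i`.  Let `UpI = U_p ⊗ I`, `IUcopy = I ⊗ U_copy`
and `UpdI = U_p† ⊗ I` (the adjoint of a unitary being its inverse `Up.symm`), so that
`Ũ_p = UpdI ∘ IUcopy ∘ UpI`.  Let `Π` be the orthogonal projection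
of `A ⊗ ℂⁿ ⊗ ℂⁿ` onto `(ℂ·a₀) ⊗ (ℂ·e₁) ⊗ ℂⁿ`, the span of the orthonormal family
`(a₀ ⊗ e₁ ⊗ e_k)_k`.  Then `Π (Ũ_p (a₀ ⊗ e₁ ⊗ e₁)) = ∑ i, p i • (a₀ ⊗ e₁ ⊗ e_i)`. -/
theorem stmt1 {n : ℕ} (hn : 1 ≤ n) {ι : Type*} [Fintype ι] [DecidableEq ι]
    (a₀ : EuclideanSpace ℂ ι) (ha₀ : ‖a₀‖ = 1)
    (φ : Fin n → EuclideanSpace ℂ ι) (hφ : Orthonormal ℂ φ)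
    (p : Fin n → ℝ) (hp0 : ∀ i, 0 ≤ p i) (hp1 : ∑ i, p i = 1)
    (e₁ : EuclideanSpace ℂ (Fin n)) (he₁ : e₁ = eb ⟨0, hn⟩)
    (Up : EuclideanSpace ℂ (ι × Fin n) ≃ₗᵢ[ℂ] EuclideanSpace ℂ (ι × Fin n))
    (hUp : Up (tp a₀ e₁) = ∑ i, (Real.sqrt (p i) : ℂ) • tp (φ i) (eb i))
    (Ucopy : EuclideanSpace ℂ (Fin n × Fin n) ≃ₗᵢ[ℂ] EuclideanSpace ℂ (Fin n × Fin n))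
    (hUcopy : ∀ i : Fin n, Ucopy (tp (eb i) e₁) = tp (eb i) (eb i))
    -- `UpI = U_p ⊗ I` on `A ⊗ ℂⁿ ⊗ ℂⁿ`:
    (UpI : EuclideanSpace ℂ ((ι × Fin n) × Fin n) ≃ₗᵢ[ℂ] EuclideanSpace ℂ ((ι × Fin n) × Fin n))
    (hUpI : ∀ (z : EuclideanSpace ℂ (ι × Fin n)) (c : EuclideanSpace ℂ (Fin n)),
      UpI (tp z c) = tp (Up z) c)
    -- `IUcopy = I ⊗ U_copy` on `A ⊗ ℂⁿ ⊗ ℂⁿ`: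
    (IUcopy : EuclideanSpace ℂ ((ι × Fin n) × Fin n) ≃ₗᵢ[ℂ] EuclideanSpace ℂ ((ι × Fin n) × Fin n))
    (hIUcopy : ∀ (a : EuclideanSpace ℂ ι) (z : EuclideanSpace ℂ (Fin n × Fin n)),
      IUcopy (tpL a z) = tpL a (Ucopy z))
    -- `UpdI = U_p† ⊗ I` on `A ⊗ ℂⁿ ⊗ ℂⁿ`:
    (UpdI : EuclideanSpace ℂ ((ι × Fin n) × Fin n) ≃ₗᵢ[ℂ] EuclideanSpace ℂ ((ι × Fin n) × Fin n))
    (hUpdI : ∀ (z : EuclideanSpace ℂ (ι × Fin n)) (c : EuclideanSpace ℂ (Fin n)),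
      UpdI (tp z c) = tp (Up.symm z) c) :
    -- `Π` is the orthogonal projection onto `(ℂ·a₀) ⊗ (ℂ·e₁) ⊗ ℂⁿ`, i.e. onto the span of
    -- the orthonormal family `(a₀ ⊗ e₁ ⊗ e_k)_{k ∈ [n]}`:
    (Submodule.orthogonalProjectionOnto
        (Submodule.span ℂ (Set.range fun k : Fin n => tp (tp a₀ e₁) (eb k)))
        (UpdI (IUcopy (UpI (tp (tp a₀ e₁) e₁)))) :
      EuclideanSpace ℂ ((ι × Fin n) × Fin n))
      = ∑ i, (p i : ℂ) • tp (tp a₀ e₁) (eb i) := by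
  classical
  set b : Fin n → EuclideanSpace ℂ ((ι × Fin n) × Fin n) :=
    fun k => tp (tp a₀ e₁) (eb k) with hb
  set K := Submodule.span ℂ (Set.range b) with hK
  -- step 1: compute the vector
  have key : UpdI (IUcopy (UpI (tp (tp a₀ e₁) e₁))) =
      ∑ i, (Real.sqrt (p i) : ℂ) • tp (Up.symm (tp (φ i) (eb i))) (eb i) := by
    rw [hUpI, hUp, tp_sum_left, map_sum]
    have h1 : ∀ i : Fin n,
        IUcopy (tp ((Real.sqrt (p i) : ℂ) • tp (φ i) (eb i)) e₁)
          = (Real.sqrt (p i) : ℂ) • tp (tp (φ i) (eb i)) (eb i) := by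
      intro i
      rw [tp_smul_left, map_smul, tp_tp_eq_tpL, hIUcopy, hUcopy, ← tp_tp_eq_tpL]
    rw [Finset.sum_congr rfl fun i _ => h1 i, map_sum]
    refine Finset.sum_congr rfl fun i _ => ?_
    rw [map_smul, hUpdI]
  rw [key]
  set v : EuclideanSpace ℂ ((ι × Fin n) × Fin n) :=
    ∑ i, (Real.sqrt (p i) : ℂ) • tp (Up.symm (tp (φ i) (eb i))) (eb i) with hv
  set s : EuclideanSpace ℂ ((ι × Fin n) × Fin n) := ∑ i, (p i : ℂ) • b i with hs
  -- basic inner products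
  have ha₀i : ⟪a₀, a₀⟫ = 1 := by
    rw [inner_self_eq_norm_sq_to_K, ha₀]; norm_num
  have he₁i : ⟪e₁, e₁⟫ = 1 := by rw [he₁, eb_inner]; simp
  have hbb : ∀ k i : Fin n, ⟪b k, b i⟫ = if k = i then 1 else 0 := by
    intro k i
    rw [hb]; simp only
    rw [tp_inner, tp_inner, ha₀i, he₁i, eb_inner]
    simp
  -- inner of tp a₀ e₁ with Up.symm (tp φᵢ ebᵢ)
  have hkey2 : ∀ i : Fin n, ⟪tp a₀ e₁, Up.symm (tp (φ i) (eb i))⟫ = (Real.sqrt (p i) : ℂ) := by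
    intro i
    rw [← Up.inner_map_map (tp a₀ e₁), Up.apply_symm_apply, hUp, sum_inner]
    have : ∀ j : Fin n, ⟪(Real.sqrt (p j) : ℂ) • tp (φ j) (eb j), tp (φ i) (eb i)⟫
        = if j = i then (Real.sqrt (p j) : ℂ) else 0 := by
      intro j
      rw [inner_smul_left, tp_inner, orthonormal_iff_ite.mp hφ, eb_inner]
      rcases eq_or_ne j i with rfl | h
      · simp [Complex.conj_ofReal]
      · simp [h]
    rw [Finset.sum_congr rfl fun j _ => this j]
    simp
  -- ⟪b k, v⟫ = p k
  have hbv : ∀ k : Fin n, ⟪b k, v⟫ = (p k : ℂ) := by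
    intro k
    rw [hv, inner_sum]
    have : ∀ i : Fin n, ⟪b k, (Real.sqrt (p i) : ℂ) • tp (Up.symm (tp (φ i) (eb i))) (eb i)⟫
        = if k = i then (p k : ℂ) else 0 := by
      intro i
      rw [inner_smul_right, hb]; simp only
      rw [tp_inner, hkey2, eb_inner]
      rcases eq_or_ne k i with rfl | h
      · simp [← Complex.ofReal_mul, Real.mul_self_sqrt (hp0 k)]
      · simp [h]
    rw [Finset.sum_congr rfl fun i _ => this i]
    simp
  -- ⟪b k, s⟫ = p k
  have hbs : ∀ k : Fin n, ⟪b k, s⟫ = (p k : ℂ) := by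
    intro k
    rw [hs, inner_sum]
    have : ∀ i : Fin n, ⟪b k, (p i : ℂ) • b i⟫ = if k = i then (p k : ℂ) else 0 := by
      intro i
      rw [inner_smul_right, hbb]
      rcases eq_or_ne k i with rfl | h
      · simp
      · simp [h]
    rw [Finset.sum_congr rfl fun i _ => this i]
    simp
  have hsK : s ∈ K := by
    refine Submodule.sum_mem _ fun i _ => Submodule.smul_mem _ _ ?_
    exact Submodule.subset_span ⟨i, rfl⟩
  have hwK : v - s ∈ Kᗮ := by
    rw [Submodule.mem_orthogonal]
    intro u hu
    induction hu using Submodule.span_induction with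
    | mem x hx =>
      obtain ⟨k, rfl⟩ := hx
      rw [inner_sub_right, hbv, hbs, sub_self]
    | zero => simp
    | add x y _ _ hx hy => rw [inner_add_left, hx, hy, add_zero]
    | smul c x _ hx => rw [inner_smul_left, hx, mul_zero]
  have hvs : v = s + (v - s) := by abel
  rw [hvs, map_add,
    Submodule.orthogonalProjectionOnto_apply_of_mem_orthogonal hwK]
  simpa using congrArg Subtype.val (Submodule.orthogonalProjectionOnto_mem_subspace_eq_self (K := K) ⟨s, hsK⟩)
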